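/- Let G be a quasi-metric kernel on Ω (symmetric, positive, with d = 1/G satisfying the quasi-triangle inequality with constant κ). Fix x₀ ∈ Ω and set g(x) = min{1, G(x,x₀)}. Then the modified kernel G̃(x,y) = G(x,y)/(g(x)g(y)) is again a quasi-metric kernel with quasi-metric constant 4κ². -/

import Mathlib

open scoped ENNReal

private lemma min_eq_inv_max (t : ℝ≥0∞) : min 1 t = (max 1 t⁻¹)⁻¹ := by
  rcases le_total 1 t with h | h
  · rw [min_eq_left h, max_eq_left (ENNReal.inv_le_one.mpr h), inv_one]
  · rw [min_eq_right h, max_eq_right (ENNReal.one_le_inv.mpr h), inv_inv]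

private lemma half_cancel {κ D A Cc : ℝ≥0∞} (hCt : Cc ≠ ⊤)
    (h1 : Cc ≤ κ * (D + A)) (h2 : 2 * (κ * A) ≤ Cc) : Cc ≤ 2 * (κ * D) := by
  have h3 : Cc + Cc ≤ 2 * (κ * D) + Cc := by
    calc Cc + Cc ≤ κ * (D + A) + κ * (D + A) := add_le_add h1 h1
      _ = 2 * (κ * D) + 2 * (κ * A) := by ring
      _ ≤ 2 * (κ * D) + Cc := add_le_add_right h2 _
  exact (ENNReal.add_le_add_iff_right hCt).mp h3

private lemma key2 {κ a b c D E dxy : ℝ≥0∞}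
    (hκ2 : 1 ≤ 2 * κ) (hct : c ≠ ⊤)
    (t2 : dxy ≤ κ * (a + b))
    (t3 : c ≤ κ * (D + a)) (t4 : c ≤ κ * (E + b))
    (hcase : 2 * (κ * max 1 a) < max 1 c) :
    dxy * max 1 c ≤ 4 * κ ^ 2 * (D * max 1 b + E * max 1 a) := by
  set A := max 1 a with hA
  set B := max 1 b with hB
  set Cc := max 1 c with hC
  have h1A : (1 : ℝ≥0∞) ≤ A := le_max_left _ _
  have h1B : (1 : ℝ≥0∞) ≤ B := le_max_left _ _
  have haA : a ≤ A := le_max_right _ _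
  have hbB : b ≤ B := le_max_right _ _
  have h1Cc : (1 : ℝ≥0∞) < Cc := by
    refine lt_of_le_of_lt ?_ hcase
    calc (1:ℝ≥0∞) ≤ 2 * κ := hκ2
      _ = 2 * (κ * 1) := by ring
      _ ≤ 2 * (κ * A) := by gcongr
  have hCeq : Cc = c := by
    rcases le_total c 1 with h | h
    · exfalso
      have : Cc = 1 := max_eq_left h
      rw [this] at h1Cc
      exact lt_irrefl _ h1Cc
    · exact max_eq_right h
  have hCt : Cc ≠ ⊤ := by rw [hCeq]; exact hct
  have hCD : Cc ≤ 2 * (κ * D) := by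
    refine half_cancel hCt ?_ hcase.le
    rw [hCeq]
    calc c ≤ κ * (D + a) := t3
      _ ≤ κ * (D + A) := by gcongr
  rcases le_total A B with hAB | hBA
  · calc dxy * Cc ≤ (κ * (A + B)) * (2 * (κ * D)) := by
          exact mul_le_mul' (t2.trans (by gcongr)) hCD
      _ ≤ (κ * (B + B)) * (2 * (κ * D)) := by gcongr
      _ = 4 * κ ^ 2 * (D * B) := by ring
      _ ≤ 4 * κ ^ 2 * (D * B + E * A) := by
          exact mul_le_mul_right le_self_add _
  · have hCE : Cc ≤ 2 * (κ * E) := by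
      refine half_cancel (κ := κ) (D := E) (A := B) hCt ?_ ?_
      · rw [hCeq]
        calc c ≤ κ * (E + b) := t4
          _ ≤ κ * (E + B) := by gcongr
      · refine le_of_lt (lt_of_le_of_lt ?_ hcase)
        gcongr
    calc dxy * Cc ≤ (κ * (A + B)) * (2 * (κ * E)) := by
          exact mul_le_mul' (t2.trans (by gcongr)) hCE
      _ ≤ (κ * (A + A)) * (2 * (κ * E)) := by gcongr
      _ = 4 * κ ^ 2 * (E * A) := by ring
      _ ≤ 4 * κ ^ 2 * (D * B + E * A) := by
          exact mul_le_mul_right le_add_self _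

private lemma key {κ a b c D E dxy : ℝ≥0∞}
    (hκ2 : 1 ≤ 2 * κ) (hct : c ≠ ⊤)
    (t1 : dxy ≤ κ * (D + E)) (t2 : dxy ≤ κ * (a + b))
    (t3 : c ≤ κ * (D + a)) (t4 : c ≤ κ * (E + b)) :
    dxy * max 1 c ≤ 4 * κ ^ 2 * (D * max 1 b + E * max 1 a) := by
  rcases lt_or_ge (2 * (κ * max 1 a)) (max 1 c) with h | hA
  · exact key2 hκ2 hct t2 t3 t4 h
  rcases lt_or_ge (2 * (κ * max 1 b)) (max 1 c) with h | hB
  · have h' := key2 hκ2 hct (t2.trans_eq (by ring)) t4 t3 h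
    calc dxy * max 1 c ≤ 4 * κ ^ 2 * (E * max 1 a + D * max 1 b) := h'
      _ = 4 * κ ^ 2 * (D * max 1 b + E * max 1 a) := by ring
  · calc dxy * max 1 c ≤ (κ * (D + E)) * max 1 c := mul_le_mul_left t1 _
      _ = κ * D * (max 1 c) + κ * E * (max 1 c) := by ring
      _ ≤ κ * D * (2 * (κ * max 1 b)) + κ * E * (2 * (κ * max 1 a)) := by gcongr
      _ = 2 * κ ^ 2 * (D * max 1 b) + 2 * κ ^ 2 * (E * max 1 a) := by ring
      _ ≤ 4 * κ ^ 2 * (D * max 1 b) + 4 * κ ^ 2 * (E * max 1 a) := by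
          have h24 : (2:ℝ≥0∞) * κ ^ 2 ≤ 4 * κ ^ 2 := by gcongr; norm_num
          exact add_le_add (mul_le_mul_left h24 _) (mul_le_mul_left h24 _)
      _ = 4 * κ ^ 2 * (D * max 1 b + E * max 1 a) := by ring

/-- If `G` is a quasi-metric kernel with constant `κ` and `g x = min 1 (G x x₀)`,
then the modified kernel `G̃ x y = G x y / (g x * g y)` is quasi-metric with
constant `4 κ ^ 2`, i.e. `d̃ x y = g x * g y / G x y` satisfies the
quasi-triangle inequality with constant `4 κ ^ 2`. -/
theorem modified_kernel_quasimetric {Ω : Type*}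
    (G : Ω → Ω → ℝ≥0∞) (κ : ℝ≥0∞)
    (hpos : ∀ x y, 0 < G x y)
    (hsym : ∀ x y, G x y = G y x)
    (htri : ∀ x y z, (G x y)⁻¹ ≤ κ * ((G x z)⁻¹ + (G z y)⁻¹))
    (x₀ : Ω) :
    ∀ x y z : Ω,
      min 1 (G x x₀) * min 1 (G y x₀) / G x y ≤
        4 * κ ^ 2 *
          (min 1 (G x x₀) * min 1 (G z x₀) / G x z +
            min 1 (G z x₀) * min 1 (G y x₀) / G z y) := by
  intro x y z
  have hinvt : ∀ p q : Ω, (G p q)⁻¹ ≠ ⊤ := fun p q => ENNReal.inv_ne_top.mpr (hpos p q).ne'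
  by_cases hκtop : κ = ⊤
  · by_cases hxz : (G x z)⁻¹ = 0
    · by_cases hzy : (G z y)⁻¹ = 0
      · -- both far: G x y = ⊤, LHS = 0
        have h0 : (G x y)⁻¹ = 0 := by
          have h := htri x y z
          rw [hxz, hzy, add_zero, mul_zero] at h
          exact le_antisymm h (zero_le)
        rw [show G x y = ⊤ from ENNReal.inv_eq_zero.mp h0, ENNReal.div_top]
        exact zero_le
      · -- second RHS term positive, RHS = ⊤
        have hterm : min 1 (G z x₀) * min 1 (G y x₀) / G z y ≠ 0 := by
          refine ENNReal.div_ne_zero.mpr ⟨?_, ENNReal.inv_ne_zero.mp hzy⟩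
          exact mul_ne_zero (lt_min zero_lt_one (hpos z x₀)).ne'
            (lt_min zero_lt_one (hpos y x₀)).ne'
        have hsum : min 1 (G x x₀) * min 1 (G z x₀) / G x z +
            min 1 (G z x₀) * min 1 (G y x₀) / G z y ≠ 0 :=
          ((pos_iff_ne_zero.mpr hterm).trans_le le_add_self).ne'
        have h4 : 4 * κ ^ 2 = ⊤ := by rw [hκtop, ENNReal.top_pow, ENNReal.mul_top] <;> norm_num
        rw [h4, ENNReal.top_mul hsum]
        exact le_top
    · -- first RHS term positive, RHS = ⊤
      have hterm : min 1 (G x x₀) * min 1 (G z x₀) / G x z ≠ 0 := by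
        refine ENNReal.div_ne_zero.mpr ⟨?_, ENNReal.inv_ne_zero.mp hxz⟩
        exact mul_ne_zero (lt_min zero_lt_one (hpos x x₀)).ne'
          (lt_min zero_lt_one (hpos z x₀)).ne'
      have hsum : min 1 (G x x₀) * min 1 (G z x₀) / G x z +
          min 1 (G z x₀) * min 1 (G y x₀) / G z y ≠ 0 :=
        ((pos_iff_ne_zero.mpr hterm).trans_le le_self_add).ne'
      have h4 : 4 * κ ^ 2 = ⊤ := by rw [hκtop, ENNReal.top_pow, ENNReal.mul_top] <;> norm_num
      rw [h4, ENNReal.top_mul hsum]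
      exact le_top
  by_cases hκ2 : 1 ≤ 2 * κ
  · -- main case
    have hct : (G z x₀)⁻¹ ≠ ⊤ := hinvt z x₀
    have t1 : (G x y)⁻¹ ≤ κ * ((G x z)⁻¹ + (G z y)⁻¹) := htri x y z
    have t2 : (G x y)⁻¹ ≤ κ * ((G x x₀)⁻¹ + (G y x₀)⁻¹) := by
      have h := htri x y x₀
      rwa [hsym x₀ y] at h
    have t3 : (G z x₀)⁻¹ ≤ κ * ((G x z)⁻¹ + (G x x₀)⁻¹) := by
      have h := htri z x₀ x
      rwa [hsym z x] at h
    have t4 : (G z x₀)⁻¹ ≤ κ * ((G z y)⁻¹ + (G y x₀)⁻¹) := htri z x₀ y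
    have hkey := key (κ := κ) hκ2 hct t1 t2 t3 t4
    rw [min_eq_inv_max (G x x₀), min_eq_inv_max (G y x₀), min_eq_inv_max (G z x₀)]
    simp only [div_eq_mul_inv]
    set A := max 1 (G x x₀)⁻¹ with hA
    set B := max 1 (G y x₀)⁻¹ with hB
    set Cc := max 1 (G z x₀)⁻¹ with hC
    have hA0 : A ≠ 0 := (lt_of_lt_of_le zero_lt_one (le_max_left _ _)).ne'
    have hB0 : B ≠ 0 := (lt_of_lt_of_le zero_lt_one (le_max_left _ _)).ne'
    have hC0 : Cc ≠ 0 := (lt_of_lt_of_le zero_lt_one (le_max_left _ _)).ne'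
    have hAt : A ≠ ⊤ := (max_lt ENNReal.one_lt_top (lt_top_iff_ne_top.mpr (hinvt x x₀))).ne
    have hBt : B ≠ ⊤ := (max_lt ENNReal.one_lt_top (lt_top_iff_ne_top.mpr (hinvt y x₀))).ne
    have hCt : Cc ≠ ⊤ := (max_lt ENNReal.one_lt_top (lt_top_iff_ne_top.mpr (hinvt z x₀))).ne
    calc A⁻¹ * B⁻¹ * (G x y)⁻¹
        = A⁻¹ * B⁻¹ * (Cc⁻¹ * Cc) * (G x y)⁻¹ := by
          rw [ENNReal.inv_mul_cancel hC0 hCt, mul_one]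
      _ = (A⁻¹ * B⁻¹ * Cc⁻¹) * ((G x y)⁻¹ * Cc) := by ring
      _ ≤ (A⁻¹ * B⁻¹ * Cc⁻¹) * (4 * κ ^ 2 * ((G x z)⁻¹ * B + (G z y)⁻¹ * A)) :=
          mul_le_mul_right hkey _
      _ = 4 * κ ^ 2 * ((A⁻¹ * Cc⁻¹ * (G x z)⁻¹) * (B⁻¹ * B)
            + (Cc⁻¹ * B⁻¹ * (G z y)⁻¹) * (A⁻¹ * A)) := by ring
      _ = 4 * κ ^ 2 * (A⁻¹ * Cc⁻¹ * (G x z)⁻¹ + Cc⁻¹ * B⁻¹ * (G z y)⁻¹) := by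
          rw [ENNReal.inv_mul_cancel hB0 hBt, ENNReal.inv_mul_cancel hA0 hAt,
            mul_one, mul_one]
  · -- degenerate case: 2κ < 1, so d ≡ 0
    push_neg at hκ2
    have hzero : ∀ p q : Ω, (G p q)⁻¹ = 0 := by
      have hqq : ∀ q : Ω, (G q q)⁻¹ = 0 := by
        intro q
        by_contra h0
        have h := htri q q q
        have hlt : (2 * κ) * (G q q)⁻¹ < 1 * (G q q)⁻¹ :=
          ENNReal.mul_lt_mul_left h0 (hinvt q q) hκ2
        rw [one_mul] at hlt
        have : (G q q)⁻¹ ≤ (2 * κ) * (G q q)⁻¹ := h.trans_eq (by ring)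
        exact absurd (this.trans_lt hlt) (lt_irrefl _)
      intro p q
      by_contra h0
      have h := htri p q q
      rw [hqq q, add_zero] at h
      have hκ1 : κ < 1 := lt_of_le_of_lt (by calc κ = κ + 0 := by ring
        _ ≤ κ + κ := by gcongr; exact zero_le
        _ = 2 * κ := by ring) hκ2
      have hlt : κ * (G p q)⁻¹ < 1 * (G p q)⁻¹ :=
        ENNReal.mul_lt_mul_left h0 (hinvt p q) hκ1
      rw [one_mul] at hlt
      exact absurd (h.trans_lt hlt) (lt_irrefl _)
    rw [show G x y = ⊤ from ENNReal.inv_eq_zero.mp (hzero x y), ENNReal.div_top]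
    exact zero_le
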